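/- Let G be a finite group with N = |G|, let k ≥ 5 be an odd integer not divisible by 3, and let φ be Euler's totient function. Then for every 2-coloring χ : G → {-1,1}, the number of monochromatic three-element sets of the form {a, b·a, b²·a} with a ∈ G and b ∈ G of order k is at least (N·N_k/8)·(1 − 3(k−φ(k))/φ(k)), where N_k is the number of elements of G of order k. -/

import Mathlib

open Finset

/-- `N_k`: the number of elements of `G` of order `k`. -/
noncomputable def orderCount (G : Type*) [Group G] [Fintype G] (k : ℕ) : ℕ :=
  (Finset.univ.filter fun g : G => orderOf g = k).card

set_option linter.unusedSectionVars false

section Aux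
lemma sum_range_add_mod {M : Type*} [AddCommMonoid M] (g : ℕ → M) (k u : ℕ) (hk : 0 < k) :
    ∑ t ∈ range k, g ((t + u) % k) = ∑ t ∈ range k, g t := by
  have hr : u % k < k := Nat.mod_lt _ hk
  have key : ∀ t < k, ((t + u) % k + (k - u % k)) % k = t := by
    intro t ht
    have h1 : (t + u) % k = (t + u % k) % k := by rw [Nat.add_mod, Nat.mod_add_mod]
    rw [h1, Nat.mod_add_mod]
    have : t + u % k + (k - u % k) = t + k := by omega
    rw [this, Nat.add_mod_right, Nat.mod_eq_of_lt ht]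
  have key2 : ∀ t < k, ((t + (k - u % k)) % k + u) % k = t := by
    intro t ht
    rw [Nat.mod_add_mod]
    have h1 : (t + (k - u % k) + u) % k = (t + (k - u % k) + u % k) % k := by
      rw [Nat.add_mod, Nat.mod_add_mod]
    rw [h1]
    have : t + (k - u % k) + u % k = t + k := by omega
    rw [this, Nat.add_mod_right, Nat.mod_eq_of_lt ht]
  refine Finset.sum_nbij' (fun t => (t + u) % k) (fun t => (t + (k - u % k)) % k) ?_ ?_ ?_ ?_ ?_
  · intro a ha; exact mem_range.mpr (Nat.mod_lt _ hk)
  · intro a ha; exact mem_range.mpr (Nat.mod_lt _ hk)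
  · intro a ha; exact key a (mem_range.mp ha)
  · intro a ha; exact key2 a (mem_range.mp ha)
  · intro a ha; rfl

variable {G : Type*} [Group G] [Fintype G]

lemma F_shift (χ : G → ℤ) (b : G) (k : ℕ) (hb : orderOf b = k) (hk : 0 < k) (u : ℕ) (a : G) :
    ∑ t ∈ range k, χ (b ^ t * (b ^ u * a)) = ∑ t ∈ range k, χ (b ^ t * a) := by
  have h : ∀ t, b ^ t * (b ^ u * a) = b ^ ((t + u) % k) * a := by
    intro t
    rw [← mul_assoc, ← pow_add]
    congr 1
    conv_rhs => rw [← hb]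
    exact (pow_mod_orderOf _ _).symm
  simp_rw [h]
  exact sum_range_add_mod (fun t => χ (b ^ t * a)) k u hk

lemma sum_S_nonneg (χ : G → ℤ) (b : G) (k : ℕ) (hb : orderOf b = k) (hk : 0 < k) :
    0 ≤ ∑ t ∈ range k, ∑ a : G, χ a * χ (b ^ t * a) := by
  have swap : ∑ t ∈ range k, ∑ a : G, χ a * χ (b ^ t * a)
      = ∑ a : G, χ a * ∑ t ∈ range k, χ (b ^ t * a) := by
    rw [Finset.sum_comm]
    simp only [Finset.mul_sum]
  have reindex : ∀ s ∈ range k, ∑ a : G, χ (b ^ s * a) * (∑ t ∈ range k, χ (b ^ t * a))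
      = ∑ a : G, χ a * ∑ t ∈ range k, χ (b ^ t * a) := by
    intro s hs
    refine Fintype.sum_equiv (Equiv.mulLeft (b ^ s)) _ _ fun a => ?_
    simp only [Equiv.coe_mulLeft]
    rw [F_shift χ b k hb hk s a]
  have key : ∑ a : G, (∑ t ∈ range k, χ (b ^ t * a)) * (∑ t ∈ range k, χ (b ^ t * a))
      = (k : ℤ) * ∑ a : G, χ a * ∑ t ∈ range k, χ (b ^ t * a) := by
    calc ∑ a : G, (∑ s ∈ range k, χ (b ^ s * a)) * (∑ t ∈ range k, χ (b ^ t * a))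
        = ∑ s ∈ range k, ∑ a : G, χ (b ^ s * a) * (∑ t ∈ range k, χ (b ^ t * a)) := by
          simp only [Finset.sum_mul]
          rw [Finset.sum_comm]
      _ = ∑ s ∈ range k, ∑ a : G, χ a * ∑ t ∈ range k, χ (b ^ t * a) :=
          Finset.sum_congr rfl reindex
      _ = (k : ℤ) * ∑ a : G, χ a * ∑ t ∈ range k, χ (b ^ t * a) := by
          rw [Finset.sum_const, card_range, nsmul_eq_mul]
  have hpos : 0 ≤ ∑ a : G, (∑ t ∈ range k, χ (b ^ t * a)) * (∑ t ∈ range k, χ (b ^ t * a)) :=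
    Finset.sum_nonneg fun a _ => mul_self_nonneg _
  rw [swap]
  have hk' : (0:ℤ) < k := by exact_mod_cast hk
  nlinarith [key ▸ hpos]

lemma sum_pow_coprime (f : G → ℤ) (k t : ℕ) (hk : 1 < k) (ht : Nat.Coprime t k) :
    ∑ b ∈ univ.filter (fun g : G => orderOf g = k), f (b ^ t)
      = ∑ b ∈ univ.filter (fun g : G => orderOf g = k), f b := by
  obtain ⟨m, -, hm⟩ := Nat.exists_mul_mod_eq_one_of_coprime ht hk
  have hmc : Nat.Coprime m k := by
    obtain ⟨q, hq⟩ : ∃ q, t * m = k * q + 1 := ⟨t * m / k, by have := Nat.div_add_mod (t * m) k; omega⟩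
    have d1 : Nat.gcd m k ∣ t * m := Dvd.dvd.mul_left (Nat.gcd_dvd_left m k) t
    have d2 : Nat.gcd m k ∣ k * q := Dvd.dvd.mul_right (Nat.gcd_dvd_right m k) q
    have := Nat.dvd_sub d1 d2
    rw [hq] at this
    simpa using this
  refine Finset.sum_nbij' (fun b => b ^ t) (fun b => b ^ m) ?_ ?_ ?_ ?_ ?_
  · intro b hb
    rw [mem_filter] at *
    have hb' := hb.2
    refine ⟨mem_univ _, ?_⟩
    rw [Nat.Coprime.orderOf_pow (by rw [hb']; exact ht.symm), hb']
  · intro b hb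
    rw [mem_filter] at *
    have hb' := hb.2
    refine ⟨mem_univ _, ?_⟩
    rw [Nat.Coprime.orderOf_pow (by rw [hb']; exact hmc.symm), hb']
  · intro b hb
    have hb' := (mem_filter.mp hb).2
    show (b ^ t) ^ m = b
    rw [← pow_mul, ← pow_mod_orderOf, hb', hm, pow_one]
  · intro b hb
    have hb' := (mem_filter.mp hb).2
    show (b ^ m) ^ t = b
    rw [← pow_mul, ← pow_mod_orderOf, hb', mul_comm, hm, pow_one]
  · intro b hb; rfl

lemma coprime_sum_lower (χ : G → ℤ) (hχ : ∀ g, χ g = 1 ∨ χ g = -1) (b : G) (k : ℕ)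
    (hb : orderOf b = k) (hk : 0 < k) :
    -(((k : ℤ) - Nat.totient k) * Fintype.card G) ≤
      ∑ t ∈ (range k).filter k.Coprime, ∑ a : G, χ a * χ (b ^ t * a) := by
  have hterm : ∀ (c : G), ∑ a : G, χ a * χ (c * a) ≤ (Fintype.card G : ℤ) := by
    intro c
    calc ∑ a : G, χ a * χ (c * a) ≤ ∑ _a : G, (1 : ℤ) := by
          refine Finset.sum_le_sum fun a _ => ?_
          rcases hχ a with h1 | h1 <;> rcases hχ (c * a) with h2 | h2 <;> rw [h1, h2] <;> norm_num
      _ = (Fintype.card G : ℤ) := by rw [Finset.sum_const, card_univ, nsmul_eq_mul, mul_one]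
  have hsub : (range k).filter k.Coprime ⊆ range k := filter_subset _ _
  have hsplit := Finset.sum_sdiff (f := fun t => ∑ a : G, χ a * χ (b ^ t * a)) hsub
  have hpos := sum_S_nonneg χ b k hb hk
  have hbound : ∑ t ∈ range k \ (range k).filter k.Coprime, ∑ a : G, χ a * χ (b ^ t * a)
      ≤ ((k : ℤ) - Nat.totient k) * Fintype.card G := by
    calc ∑ t ∈ range k \ (range k).filter k.Coprime, ∑ a : G, χ a * χ (b ^ t * a)
        ≤ ∑ _t ∈ range k \ (range k).filter k.Coprime, (Fintype.card G : ℤ) :=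
          Finset.sum_le_sum fun t _ => hterm _
      _ = ((k : ℤ) - Nat.totient k) * Fintype.card G := by
          rw [Finset.sum_const, card_sdiff_of_subset hsub, card_range, nsmul_eq_mul]
          have h1 : Nat.totient k ≤ k := Nat.totient_le k
          have h2 : ((range k).filter k.Coprime).card = Nat.totient k := rfl
          rw [h2]
          push_cast [h1]
          ring
  linarith

lemma global_S_bound (χ : G → ℤ) (hχ : ∀ g, χ g = 1 ∨ χ g = -1) (k : ℕ) (hk : 5 ≤ k) :
    -((((univ.filter fun g : G => orderOf g = k).card : ℤ)) *
        (((k : ℤ) - Nat.totient k) * Fintype.card G)) ≤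
      (Nat.totient k : ℤ) *
        ∑ b ∈ univ.filter (fun g : G => orderOf g = k), ∑ a : G, χ a * χ (b * a) := by
  have hk1 : 1 < k := by omega
  have hk0 : 0 < k := by omega
  have heq : (Nat.totient k : ℤ) *
        ∑ b ∈ univ.filter (fun g : G => orderOf g = k), ∑ a : G, χ a * χ (b * a)
      = ∑ b ∈ univ.filter (fun g : G => orderOf g = k),
          ∑ t ∈ (range k).filter k.Coprime, ∑ a : G, χ a * χ (b ^ t * a) := by
    conv_rhs => rw [Finset.sum_comm]
    have h1 : ∀ t ∈ (range k).filter k.Coprime,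
        ∑ b ∈ univ.filter (fun g : G => orderOf g = k), ∑ a : G, χ a * χ (b ^ t * a)
          = ∑ b ∈ univ.filter (fun g : G => orderOf g = k), ∑ a : G, χ a * χ (b * a) := by
      intro t ht
      exact sum_pow_coprime (fun c => ∑ a : G, χ a * χ (c * a)) k t hk1
        ((mem_filter.mp ht).2.symm)
    rw [Finset.sum_congr rfl h1, Finset.sum_const, nsmul_eq_mul]
    norm_num [Nat.totient]
  rw [heq]
  have h2 : ∑ _b ∈ univ.filter (fun g : G => orderOf g = k),
        (-(((k : ℤ) - Nat.totient k) * Fintype.card G)) ≤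
      ∑ b ∈ univ.filter (fun g : G => orderOf g = k),
        ∑ t ∈ (range k).filter k.Coprime, ∑ a : G, χ a * χ (b ^ t * a) :=
    Finset.sum_le_sum (fun b hb => coprime_sum_lower χ hχ b k (mem_filter.mp hb).2 hk0)
  refine le_trans (le_of_eq ?_) h2
  rw [Finset.sum_const, nsmul_eq_mul]
  ring

lemma key1 [DecidableEq G] (χ : G → ℤ) (hχ : ∀ g, χ g = 1 ∨ χ g = -1) (k : ℕ) :
    (4 : ℤ) * ((univ.filter fun p : G × G =>
        orderOf p.2 = k ∧ χ p.1 = χ (p.2 * p.1) ∧ χ p.1 = χ (p.2 ^ 2 * p.1)).card)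
      = (Fintype.card G : ℤ) * ((univ.filter fun g : G => orderOf g = k).card)
        + 2 * (∑ b ∈ univ.filter (fun g : G => orderOf g = k), ∑ a : G, χ a * χ (b * a))
        + ∑ b ∈ univ.filter (fun g : G => orderOf g = k), ∑ a : G, χ a * χ (b ^ 2 * a) := by
  have step1 : ((univ.filter fun p : G × G =>
        orderOf p.2 = k ∧ χ p.1 = χ (p.2 * p.1) ∧ χ p.1 = χ (p.2 ^ 2 * p.1)).card : ℤ)
      = ∑ b ∈ univ.filter (fun g : G => orderOf g = k),
          ∑ a : G, (if χ a = χ (b * a) ∧ χ a = χ (b ^ 2 * a) then (1 : ℤ) else 0) := by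
    rw [Finset.natCast_card_filter]
    rw [Fintype.sum_prod_type]
    rw [Finset.sum_comm]
    rw [Finset.sum_filter]
    refine Finset.sum_congr rfl fun b _ => ?_
    by_cases hb : orderOf b = k
    · simp only [hb, if_true, true_and]
    · simp only [hb, if_false, false_and, Finset.sum_const_zero]
  have step2 : ∀ b : G, (4 : ℤ) * ∑ a : G, (if χ a = χ (b * a) ∧ χ a = χ (b ^ 2 * a)
        then (1 : ℤ) else 0)
      = (Fintype.card G : ℤ) + 2 * (∑ a : G, χ a * χ (b * a)) + ∑ a : G, χ a * χ (b ^ 2 * a) := by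
    intro b
    have expand : ∀ a : G, (4 : ℤ) * (if χ a = χ (b * a) ∧ χ a = χ (b ^ 2 * a)
          then (1 : ℤ) else 0)
        = 1 + χ a * χ (b * a) + χ a * χ (b ^ 2 * a) + χ (b * a) * χ (b ^ 2 * a) := by
      intro a
      rcases hχ a with h1 | h1 <;> rcases hχ (b * a) with h2 | h2 <;>
        rcases hχ (b ^ 2 * a) with h3 | h3 <;> rw [h1, h2, h3] <;> norm_num
    calc (4 : ℤ) * ∑ a : G, (if χ a = χ (b * a) ∧ χ a = χ (b ^ 2 * a) then (1 : ℤ) else 0)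
        = ∑ a : G, (4 : ℤ) * (if χ a = χ (b * a) ∧ χ a = χ (b ^ 2 * a) then (1 : ℤ) else 0) :=
          Finset.mul_sum _ _ _
      _ = ∑ a : G, (1 + χ a * χ (b * a) + χ a * χ (b ^ 2 * a) + χ (b * a) * χ (b ^ 2 * a)) :=
          Finset.sum_congr rfl fun a _ => expand a
      _ = (∑ _a : G, (1:ℤ)) + (∑ a : G, χ a * χ (b * a)) + (∑ a : G, χ a * χ (b ^ 2 * a))
            + ∑ a : G, χ (b * a) * χ (b ^ 2 * a) := by
          rw [← Finset.sum_add_distrib, ← Finset.sum_add_distrib, ← Finset.sum_add_distrib]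
      _ = (Fintype.card G : ℤ) + 2 * (∑ a : G, χ a * χ (b * a)) + ∑ a : G, χ a * χ (b ^ 2 * a) := by
          have hre : ∑ a : G, χ (b * a) * χ (b ^ 2 * a) = ∑ a : G, χ a * χ (b * a) := by
            refine Fintype.sum_equiv (Equiv.mulLeft b) _ _ fun a => ?_
            simp only [Equiv.coe_mulLeft]
            congr 1
            rw [pow_two, mul_assoc]
          rw [hre, Finset.sum_const, card_univ, nsmul_eq_mul, mul_one]
          ring
  calc (4 : ℤ) * ((univ.filter fun p : G × G =>
        orderOf p.2 = k ∧ χ p.1 = χ (p.2 * p.1) ∧ χ p.1 = χ (p.2 ^ 2 * p.1)).card)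
      = ∑ b ∈ univ.filter (fun g : G => orderOf g = k),
          (4 : ℤ) * ∑ a : G, (if χ a = χ (b * a) ∧ χ a = χ (b ^ 2 * a) then (1 : ℤ) else 0) := by
        rw [step1, Finset.mul_sum]
    _ = ∑ b ∈ univ.filter (fun g : G => orderOf g = k),
          ((Fintype.card G : ℤ) + 2 * (∑ a : G, χ a * χ (b * a)) + ∑ a : G, χ a * χ (b ^ 2 * a)) :=
        Finset.sum_congr rfl fun b _ => step2 b
    _ = _ := by
        rw [Finset.sum_add_distrib, Finset.sum_add_distrib, Finset.sum_const, nsmul_eq_mul,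
          Finset.mul_sum]
        ring

lemma pairs_lower [DecidableEq G] (χ : G → ℤ) (hχ : ∀ g, χ g = 1 ∨ χ g = -1) (k : ℕ)
    (hk : 5 ≤ k) (hodd : Odd k) :
    (Fintype.card G : ℝ) * ((univ.filter fun g : G => orderOf g = k).card) / 4 *
        (1 - 3 * ((k : ℝ) - Nat.totient k) / Nat.totient k)
      ≤ (((univ.filter fun p : G × G =>
          orderOf p.2 = k ∧ χ p.1 = χ (p.2 * p.1) ∧ χ p.1 = χ (p.2 ^ 2 * p.1)).card : ℝ)) := by
  have hk1 : 1 < k := by omega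
  have hφ : 0 < Nat.totient k := Nat.totient_pos.mpr (by omega)
  have h2 := key1 χ hχ k
  have hsq : ∑ b ∈ univ.filter (fun g : G => orderOf g = k), ∑ a : G, χ a * χ (b ^ 2 * a)
      = ∑ b ∈ univ.filter (fun g : G => orderOf g = k), ∑ a : G, χ a * χ (b * a) :=
    sum_pow_coprime (fun c => ∑ a : G, χ a * χ (c * a)) k 2 hk1 (Nat.coprime_two_left.mpr hodd)
  rw [hsq] at h2
  have h3 := global_S_bound χ hχ k hk
  have h2i : (4 : ℤ) * ((univ.filter fun p : G × G =>
        orderOf p.2 = k ∧ χ p.1 = χ (p.2 * p.1) ∧ χ p.1 = χ (p.2 ^ 2 * p.1)).card)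
      = (Fintype.card G : ℤ) * ((univ.filter fun g : G => orderOf g = k).card)
        + 3 * ∑ b ∈ univ.filter (fun g : G => orderOf g = k), ∑ a : G, χ a * χ (b * a) := by
    linarith [h2]
  have h2r : (4 : ℝ) * (((univ.filter fun p : G × G =>
        orderOf p.2 = k ∧ χ p.1 = χ (p.2 * p.1) ∧ χ p.1 = χ (p.2 ^ 2 * p.1)).card : ℝ))
      = (Fintype.card G : ℝ) * ((univ.filter fun g : G => orderOf g = k).card)
        + 3 * ((∑ b ∈ univ.filter (fun g : G => orderOf g = k),
            ∑ a : G, χ a * χ (b * a) : ℤ) : ℝ) := by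
    exact_mod_cast h2i
  have h3r : -((((univ.filter fun g : G => orderOf g = k).card : ℝ)) *
        (((k : ℝ) - Nat.totient k) * (Fintype.card G : ℝ)))
      ≤ (Nat.totient k : ℝ) * ((∑ b ∈ univ.filter (fun g : G => orderOf g = k),
          ∑ a : G, χ a * χ (b * a) : ℤ) : ℝ) := by
    exact_mod_cast h3
  set A : ℝ := (Fintype.card G : ℝ)
  set B : ℝ := ((univ.filter fun g : G => orderOf g = k).card : ℝ)
  set P : ℝ := (((univ.filter fun p : G × G =>
      orderOf p.2 = k ∧ χ p.1 = χ (p.2 * p.1) ∧ χ p.1 = χ (p.2 ^ 2 * p.1)).card : ℝ))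
  set S : ℝ := ((∑ b ∈ univ.filter (fun g : G => orderOf g = k),
      ∑ a : G, χ a * χ (b * a) : ℤ) : ℝ)
  set φR : ℝ := (Nat.totient k : ℝ) with hφR
  have hφR0 : (0 : ℝ) < φR := by rw [hφR]; exact_mod_cast hφ
  have heq : A * B / 4 * (1 - 3 * ((k : ℝ) - φR) / φR)
      = (φR * (A * B) - 3 * (A * B) * ((k : ℝ) - φR)) / (4 * φR) := by
    field_simp
  rw [heq, div_le_iff₀ (by positivity)]
  nlinarith [h2r, h3r]

lemma fiber_classify [DecidableEq G] (k : ℕ) (hk : 5 ≤ k) (a a' b b' : G)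
    (hb : orderOf b = k) (hb' : orderOf b' = k)
    (hset : ({a', b' * a', b' ^ 2 * a'} : Finset G) = {a, b * a, b ^ 2 * a}) :
    (a' = a ∧ b' = b) ∨ (a' = b ^ 2 * a ∧ b' = b⁻¹) := by
  have m1 : a' ∈ ({a, b * a, b ^ 2 * a} : Finset G) := by
    rw [← hset]; simp
  have m2 : b' * a' ∈ ({a, b * a, b ^ 2 * a} : Finset G) := by
    rw [← hset]; simp
  have m3 : b' ^ 2 * a' ∈ ({a, b * a, b ^ 2 * a} : Finset G) := by
    rw [← hset]; simp
  simp only [Finset.mem_insert, Finset.mem_singleton] at m1 m2 m3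
  have conv2 : ∀ x : G, (x = a ∨ x = b * a ∨ x = b ^ 2 * a) →
      ∃ i : ℤ, (i = 0 ∨ i = 1 ∨ i = 2) ∧ x = b ^ i * a := by
    rintro x (h | h | h)
    · exact ⟨0, Or.inl rfl, by simpa using h⟩
    · exact ⟨1, Or.inr (Or.inl rfl), by simpa using h⟩
    · refine ⟨2, Or.inr (Or.inr rfl), ?_⟩
      rw [h, show ((2 : ℤ)) = ((2 : ℕ) : ℤ) by norm_num, zpow_natCast]
  obtain ⟨i, hi, hia⟩ := conv2 a' m1
  obtain ⟨j, hj, hja⟩ := conv2 (b' * a') m2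
  obtain ⟨l, hl, hla⟩ := conv2 (b' ^ 2 * a') m3
  have hb'eq : b' = b ^ (j - i) := by
    have h := hja
    rw [hia] at h
    calc b' = b' * (b ^ i * a) * (b ^ i * a)⁻¹ := by group
      _ = b ^ j * a * (b ^ i * a)⁻¹ := by rw [h]
      _ = b ^ (j - i) := by group
  have hpow : b ^ (2 * (j - i) + i - l) = 1 := by
    have h := hla
    rw [hia, hb'eq] at h
    calc b ^ (2 * (j - i) + i - l)
        = ((b ^ (j - i)) ^ 2 * (b ^ i * a)) * (b ^ l * a)⁻¹ := by group
      _ = (b ^ l * a) * (b ^ l * a)⁻¹ := by rw [h]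
      _ = 1 := by group
  have hdvd : (k : ℤ) ∣ (2 * (j - i) + i - l) := by
    rw [← hb]
    exact orderOf_dvd_iff_zpow_eq_one.mpr hpow
  have hbne1 : b' ≠ 1 := by
    intro h
    rw [h, orderOf_one] at hb'
    omega
  have hij : i ≠ j := by
    intro h
    apply hbne1
    rw [hb'eq, ← h, sub_self, zpow_zero]
  have hjl : j ≠ l := by
    intro h
    apply hbne1
    have heq : b' * a' = b' ^ 2 * a' := by rw [hja, hla, h]
    have h2 : b' = b' ^ 2 := mul_right_cancel heq
    rw [pow_two] at h2
    have h4 : b' * 1 = b' * b' := by rw [mul_one]; exact h2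
    exact (mul_left_cancel h4).symm
  have hil : i ≠ l := by
    intro h
    have h1 : b' ^ 2 * a' = 1 * a' := by rw [hla, ← h, ← hia, one_mul]
    have h2 : b' ^ 2 = 1 := mul_right_cancel h1
    have hd := orderOf_dvd_of_pow_eq_one h2
    rw [hb'] at hd
    have := Nat.le_of_dvd (by norm_num) hd
    omega
  have hd0 : 2 * (j - i) + i - l = 0 := by
    by_contra hne
    have h5 : (5 : ℤ) ≤ k := by exact_mod_cast hk
    have hd2 : (k : ℤ) ∣ |2 * (j - i) + i - l| := (dvd_abs _ _).mpr hdvd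
    have hle := Int.le_of_dvd (abs_pos.mpr hne) hd2
    have habs : |2 * (j - i) + i - l| ≤ 4 := abs_le.mpr (by omega)
    omega
  have hcase : (i = 0 ∧ j = 1 ∧ l = 2) ∨ (i = 2 ∧ j = 1 ∧ l = 0) := by omega
  rcases hcase with ⟨hi0, hj1, _⟩ | ⟨hi2, hj1, _⟩
  · left
    constructor
    · rw [hia, hi0, zpow_zero, one_mul]
    · rw [hb'eq, hj1, hi0]; norm_num
  · right
    constructor
    · rw [hia, hi2, show ((2 : ℤ)) = ((2 : ℕ) : ℤ) by norm_num, zpow_natCast]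
    · rw [hb'eq, hj1, hi2]
      norm_num

lemma card_three [DecidableEq G] (k : ℕ) (hk : 5 ≤ k) (a b : G) (hb : orderOf b = k) :
    ({a, b * a, b ^ 2 * a} : Finset G).card = 3 := by
  have hbne : b ≠ 1 := by
    intro h; rw [h, orderOf_one] at hb; omega
  have hb2ne : b ^ 2 ≠ 1 := by
    intro h
    have := Nat.le_of_dvd (by norm_num) (hb ▸ orderOf_dvd_of_pow_eq_one h)
    omega
  have h1 : a ≠ b * a := by
    intro h; apply hbne
    have : (1 : G) * a = b * a := by rw [one_mul, ← h]
    exact (mul_right_cancel this).symm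
  have h2 : a ≠ b ^ 2 * a := by
    intro h; apply hb2ne
    have : (1 : G) * a = b ^ 2 * a := by rw [one_mul, ← h]
    exact (mul_right_cancel this).symm
  have h3 : b * a ≠ b ^ 2 * a := by
    intro h
    apply hbne
    have h5 : b = b ^ 2 := mul_right_cancel h
    rw [pow_two] at h5
    have h6 : b * 1 = b * b := by rw [mul_one]; exact h5
    exact (mul_left_cancel h6).symm
  rw [Finset.card_eq_three]
  exact ⟨a, b * a, b ^ 2 * a, h1, h2, h3, rfl⟩

theorem mono_threeAP_order_k_lower_bound' (k : ℕ) [DecidableEq G] (hk : 5 ≤ k) (hodd : Odd k)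
    (h3 : ¬ 3 ∣ k) (χ : G → ℤ) (hχ : ∀ g, χ g = 1 ∨ χ g = -1) :
    (Fintype.card G : ℝ) * ((univ.filter fun g : G => orderOf g = k).card) / 8 *
        (1 - 3 * ((k : ℝ) - Nat.totient k) / Nat.totient k) ≤
      Set.ncard {s : Finset G | s.card = 3 ∧
        (∃ a b : G, orderOf b = k ∧ s = {a, b * a, b ^ 2 * a}) ∧
        ∀ x ∈ s, ∀ y ∈ s, χ x = χ y} := by
  classical
  set Sset := {s : Finset G | s.card = 3 ∧
      (∃ a b : G, orderOf b = k ∧ s = {a, b * a, b ^ 2 * a}) ∧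
      ∀ x ∈ s, ∀ y ∈ s, χ x = χ y} with hSset
  set Pfin := univ.filter fun p : G × G =>
      orderOf p.2 = k ∧ χ p.1 = χ (p.2 * p.1) ∧ χ p.1 = χ (p.2 ^ 2 * p.1) with hPfin
  set f : G × G → Finset G := fun p => {p.1, p.2 * p.1, p.2 ^ 2 * p.1} with hf
  have himg : ∀ p ∈ Pfin, f p ∈ Sset := by
    rintro ⟨a, b⟩ hp
    rw [hPfin, mem_filter] at hp
    obtain ⟨-, hord, hm1, hm2⟩ := hp
    refine ⟨card_three k hk a b hord, ⟨a, b, hord, rfl⟩, ?_⟩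
    intro x hx y hy
    simp only [hf, Finset.mem_insert, Finset.mem_singleton] at hx hy
    rcases hx with rfl | rfl | rfl <;> rcases hy with rfl | rfl | rfl <;> linarith [hm1, hm2]
  have hfib : ∀ s ∈ Pfin.image f, (Pfin.filter (fun p => f p = s)).card ≤ 2 := by
    intro s hs
    obtain ⟨p, hp, rfl⟩ := Finset.mem_image.mp hs
    have hsub : Pfin.filter (fun q => f q = f p) ⊆ {p, (p.2 ^ 2 * p.1, p.2⁻¹)} := by
      intro q hq
      rw [mem_filter] at hq
      obtain ⟨hq1, hq2⟩ := hq
      rw [hPfin, mem_filter] at hq1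
      have hordq : orderOf q.2 = k := hq1.2.1
      have hordp : orderOf p.2 = k := ((mem_filter.mp (hPfin ▸ hp)).2).1
      have := fiber_classify k hk p.1 q.1 p.2 q.2 hordp hordq hq2
      rcases this with ⟨h1, h2⟩ | ⟨h1, h2⟩
      · simp only [Finset.mem_insert, Finset.mem_singleton]
        left
        exact Prod.ext h1 h2
      · simp only [Finset.mem_insert, Finset.mem_singleton]
        right
        exact Prod.ext h1 h2
    calc (Pfin.filter (fun q => f q = f p)).card
        ≤ ({p, (p.2 ^ 2 * p.1, p.2⁻¹)} : Finset (G × G)).card := Finset.card_le_card hsub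
      _ ≤ 2 := by
        refine le_trans (Finset.card_insert_le _ _) ?_
        simp
  have hcard : Pfin.card ≤ 2 * (Pfin.image f).card := Finset.card_le_mul_card_image Pfin 2 hfib
  have hsub2 : ((Pfin.image f : Finset (Finset G)) : Set (Finset G)) ⊆ Sset := by
    intro s hs
    rw [Finset.coe_image] at hs
    obtain ⟨p, hp, rfl⟩ := hs
    exact himg p hp
  have hncard : (Pfin.image f).card ≤ Sset.ncard := by
    rw [← Set.ncard_coe_finset]
    exact Set.ncard_le_ncard hsub2 (Set.toFinite _)
  have hchain : (Pfin.card : ℝ) ≤ 2 * Sset.ncard := by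
    calc (Pfin.card : ℝ) ≤ 2 * ((Pfin.image f).card : ℝ) := by exact_mod_cast hcard
      _ ≤ 2 * Sset.ncard := by
        have : ((Pfin.image f).card : ℝ) ≤ (Sset.ncard : ℝ) := by exact_mod_cast hncard
        linarith
  have hpl := pairs_lower χ hχ k hk hodd
  calc (Fintype.card G : ℝ) * ((univ.filter fun g : G => orderOf g = k).card) / 8 *
        (1 - 3 * ((k : ℝ) - Nat.totient k) / Nat.totient k)
      = ((Fintype.card G : ℝ) * ((univ.filter fun g : G => orderOf g = k).card) / 4 *
        (1 - 3 * ((k : ℝ) - Nat.totient k) / Nat.totient k)) / 2 := by ring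
    _ ≤ (Pfin.card : ℝ) / 2 := by
        rw [hPfin]
        linarith [hpl]
    _ ≤ Sset.ncard := by linarith [hchain]

end Aux

theorem mono_threeAP_order_k_lower_bound (G : Type*) [Group G] [Fintype G] [DecidableEq G]
    (k : ℕ) (hk : 5 ≤ k) (hodd : Odd k) (h3 : ¬ 3 ∣ k)
    (χ : G → ℤ) (hχ : ∀ g, χ g = 1 ∨ χ g = -1) :
    (Fintype.card G : ℝ) * (orderCount G k) / 8 *
        (1 - 3 * ((k : ℝ) - Nat.totient k) / Nat.totient k) ≤
      Set.ncard {s : Finset G | s.card = 3 ∧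
        (∃ a b : G, orderOf b = k ∧ s = {a, b * a, b ^ 2 * a}) ∧
        ∀ x ∈ s, ∀ y ∈ s, χ x = χ y} := by
  have h := mono_threeAP_order_k_lower_bound' (G := G) k hk hodd h3 χ hχ
  unfold orderCount
  convert h using 2
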